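/- arXiv:1112.3047 — 2 statements merged into one kernel-verified Lean document; each statement's English description precedes it below -/
import Mathlib

section
/- The anti-involution 𝑇ε̃ maps every Grassmann basis monomial m = e_{i1}···e_{ik} (i1 < ··· < ik) of Cl_{p,q} to its inverse: 𝑇ε̃(m) = m^{-1}. -/
/-- The signature `(p,q)` sequence: `ε_i = 1` for `i < p` and `ε_i = -1` otherwise. -/
def sig (p q : ℕ) : Fin (p + q) → ℝ := fun i => if (i : ℕ) < p then 1 else -1

/-- The quadratic form `x_1² + ⋯ + x_p² − x_{p+1}² − ⋯ − x_{p+q}²` on `ℝ^{p+q}`. -/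
noncomputable def sigQ (p q : ℕ) : QuadraticForm ℝ (Fin (p + q) → ℝ) :=
  QuadraticMap.weightedSumSquares ℝ (sig p q)

/-- The Grassmann basis monomial `e_I = e_{i₁} ⋯ e_{i_k}` (indices in increasing order)
in `Cl_{p,q}`. -/
noncomputable def basisMonomial (p q : ℕ) (I : Finset (Fin (p + q))) :
    CliffordAlgebra (sigQ p q) :=
  ((I.sort (· ≤ ·)).map fun i =>
    CliffordAlgebra.ι (sigQ p q) (Pi.single i 1 : Fin (p + q) → ℝ)).prod

/-- the transposition anti-involution `𝑇ε̃ = T_ε ∘ β` maps every Grassmann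
basis monomial `m = e_{i₁}⋯e_{i_k}` of `Cl_{p,q}` to its inverse: `𝑇ε̃(m) = m⁻¹`. -/
theorem stmt8 (p q : ℕ) (t : (Fin (p + q) → ℝ) →ₗ[ℝ] (Fin (p + q) → ℝ))
    (ht : ∀ i, t ((Pi.single i 1 : Fin (p + q) → ℝ))
      = sig p q i • (Pi.single i 1 : Fin (p + q) → ℝ))
    (F : CliffordAlgebra (sigQ p q) →ₐ[ℝ] CliffordAlgebra (sigQ p q))
    (hF : ∀ x, F (CliffordAlgebra.ι (sigQ p q) x) = CliffordAlgebra.ι (sigQ p q) (t x)) :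
    ∀ I : Finset (Fin (p + q)),
      F (CliffordAlgebra.reverse (basisMonomial p q I)) * basisMonomial p q I = 1 ∧
      basisMonomial p q I * F (CliffordAlgebra.reverse (basisMonomial p q I)) = 1 := by
  classical
  have hQ : ∀ i : Fin (p + q), sigQ p q (Pi.single i 1) = sig p q i := by
    intro i
    simp only [sigQ, QuadraticMap.weightedSumSquares_apply]
    rw [Finset.sum_eq_single i]
    · simp
    · intro j _ hj; simp [Pi.single_apply, hj]
    · simp
  have hsig : ∀ i : Fin (p + q), sig p q i * sig p q i = 1 := by
    intro i; simp only [sig]; split <;> norm_num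
  have key1 : ∀ i : Fin (p + q),
      F (CliffordAlgebra.ι (sigQ p q) (Pi.single i 1)) *
        CliffordAlgebra.ι (sigQ p q) (Pi.single i 1) = 1 := by
    intro i
    rw [hF, ht, map_smul, smul_mul_assoc, CliffordAlgebra.ι_sq_scalar, hQ,
      Algebra.smul_def, ← map_mul, hsig, map_one]
  have key2 : ∀ i : Fin (p + q),
      CliffordAlgebra.ι (sigQ p q) (Pi.single i 1) *
        F (CliffordAlgebra.ι (sigQ p q) (Pi.single i 1)) = 1 := by
    intro i
    rw [hF, ht, map_smul, mul_smul_comm, CliffordAlgebra.ι_sq_scalar, hQ,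
      Algebra.smul_def, ← map_mul, hsig, map_one]
  have main : ∀ l : List (Fin (p + q)),
      F (CliffordAlgebra.reverse
          ((l.map fun i => CliffordAlgebra.ι (sigQ p q) (Pi.single i 1)).prod)) *
        (l.map fun i => CliffordAlgebra.ι (sigQ p q) (Pi.single i 1)).prod = 1 ∧
      (l.map fun i => CliffordAlgebra.ι (sigQ p q) (Pi.single i 1)).prod *
        F (CliffordAlgebra.reverse
          ((l.map fun i => CliffordAlgebra.ι (sigQ p q) (Pi.single i 1)).prod)) = 1 := by
    intro l
    induction l with
    | nil => simp
    | cons a l ih =>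
      simp only [List.map_cons, List.prod_cons, map_mul, CliffordAlgebra.reverse.map_mul,
        CliffordAlgebra.reverse_ι]
      constructor
      · rw [mul_assoc, ← mul_assoc (F (CliffordAlgebra.ι (sigQ p q) (Pi.single a 1))),
          key1, one_mul, ih.1]
      · rw [← mul_assoc, mul_assoc _ _ (F (CliffordAlgebra.reverse _)),
          ih.2, mul_one, key2]
  intro I
  exact ⟨(main _).1, (main _).2⟩
end

section
/- The stabilizer of the idempotent group under conjugation equals the centralizer: G_{p,q}(f) = C_{G_{p,q}}(T_{p,q}(f)), i.e., a monomial m ∈ G_{p,q} stabilizes f = (1/2^k)∏(1 + e_{I_j}) under conjugation if and only if m commutes with each generator e_{I_j} of T_{p,q}(f). -/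
private lemma aux_expand {R : Type*} [CommRing R] [Algebra ℝ R] {k : ℕ} (x : Fin k → R) :
    (List.ofFn fun j => (2:ℝ)⁻¹ • (1 + x j)).prod
      = ∑ S : Finset (Fin k), ((2:ℝ)⁻¹)^k • ∏ j ∈ S, x j := by
  classical
  rw [List.prod_ofFn]
  have h1 : (∏ j : Fin k, (2:ℝ)⁻¹ • (1 + x j)) = ((2:ℝ)⁻¹)^k • ∏ j : Fin k, (1 + x j) := by
    simp_rw [Algebra.smul_def]
    rw [Finset.prod_mul_distrib, Finset.prod_const, Finset.card_univ, Fintype.card_fin,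
      ← map_pow, ← Algebra.smul_def]
  rw [h1, ← Finset.smul_sum]
  congr 1
  have h := Finset.prod_add x (fun _ => (1:R)) Finset.univ
  simp only [Finset.prod_const_one, mul_one] at h
  rw [show (∏ j : Fin k, (1 + x j)) = ∏ j : Fin k, (x j + 1) from by simp [add_comm], h,
    Finset.powerset_univ]

private lemma aux_absorb {R : Type*} [CommRing R] [Algebra ℝ R] {k : ℕ} (x : Fin k → R)
    (hx2 : ∀ j, x j * x j = 1) (j : Fin k) :
    (List.ofFn fun i => (2:ℝ)⁻¹ • (1 + x i)).prod * x j
      = (List.ofFn fun i => (2:ℝ)⁻¹ • (1 + x i)).prod := by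
  classical
  rw [List.prod_ofFn, ← Finset.mul_prod_erase Finset.univ _ (Finset.mem_univ j), mul_right_comm]
  congr 1
  rw [smul_mul_assoc, add_mul, one_mul, hx2 j, add_comm]

set_option synthInstance.maxHeartbeats 1000000 in

/-- let `e_{I₁}, …, e_{I_k}` be commuting monomials of `Cl_{p,q}`, each
squaring to `1`, whose subset-products are linearly independent, and let
`f = ∏ⱼ (1 + e_{Iⱼ})/2`.  A vee-group monomial `g` (with inverse `g'`, conjugating each
`e_{Iⱼ}` to `±e_{Iⱼ}`) stabilizes `f` under conjugation iff it commutes with every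
generator `e_{Iⱼ}` of the idempotent group `T_{p,q}(f)`. -/
theorem stmt18 (p q k : ℕ) (m : Fin k → CliffordAlgebra (sigQ p q))
    (hmc : ∀ j j', m j * m j' = m j' * m j)
    (hm2 : ∀ j, m j * m j = 1)
    (hli : LinearIndependent ℝ fun S : Finset (Fin k) => ((S.sort (· ≤ ·)).map m).prod)
    (f : CliffordAlgebra (sigQ p q))
    (hfdef : f = (List.ofFn fun j : Fin k => (2 : ℝ)⁻¹ • (1 + m j)).prod)
    (g g' : CliffordAlgebra (sigQ p q)) (hgu : g * g' = 1) (hgu' : g' * g = 1)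
    (hsign : ∀ j, g * m j * g' = m j ∨ g * m j * g' = -(m j)) :
    g * f * g' = f ↔ ∀ j, g * m j * g' = m j := by
  classical
  have hcomm : ∀ a ∈ Set.range m, ∀ b ∈ Set.range m, a * b = b * a := by
    rintro a ⟨i, rfl⟩ b ⟨j, rfl⟩; exact hmc i j
  letI : CommRing (Algebra.adjoin ℝ (Set.range m)) := Algebra.adjoinCommRingOfComm ℝ hcomm
  let m' : Fin k → Algebra.adjoin ℝ (Set.range m) :=
    fun j => ⟨m j, Algebra.subset_adjoin ⟨j, rfl⟩⟩
  have hm'2 : ∀ j, m' j * m' j = 1 := fun j => Subtype.ext (hm2 j)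
  set V := (Algebra.adjoin ℝ (Set.range m)).val with hV
  have hfF : f = V ((List.ofFn fun j => (2:ℝ)⁻¹ • (1 + m' j)).prod) := by
    rw [hfdef, map_list_prod, List.map_ofFn]
    congr 1
  have key : ∀ S : Finset (Fin k), V (∏ j ∈ S, m' j) = ((S.sort (· ≤ ·)).map m).prod := by
    intro S
    have h1 : ∏ j ∈ S, m' j = ((S.sort (· ≤ ·)).map m').prod := by
      conv_rhs => rw [← Multiset.prod_coe, ← Multiset.map_coe, Finset.sort_eq]
      rfl
    rw [h1, map_list_prod, List.map_map]
    rfl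
  have hexp : f = ∑ S : Finset (Fin k), ((2:ℝ)⁻¹)^k • ((S.sort (· ≤ ·)).map m).prod := by
    rw [hfF, aux_expand, map_sum]
    congr 1; funext S
    rw [map_smul, key]
  have hf0 : f ≠ 0 := by
    intro h0
    have h1 : ∑ S : Finset (Fin k), ((2:ℝ)⁻¹)^k • ((S.sort (· ≤ ·)).map m).prod = 0 := by
      rw [← hexp, h0]
    have := Fintype.linearIndependent_iff.mp hli (fun _ => ((2:ℝ)⁻¹)^k) h1 ∅
    exact pow_ne_zero k (by norm_num) this
  have hfm : ∀ j, f * m j = f := by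
    intro j
    calc f * m j = V ((List.ofFn fun i => (2:ℝ)⁻¹ • (1 + m' i)).prod) * V (m' j) := by
          rw [hfF]; rfl
      _ = V ((List.ofFn fun i => (2:ℝ)⁻¹ • (1 + m' i)).prod * m' j) := (map_mul _ _ _).symm
      _ = f := by rw [aux_absorb m' hm'2 j, hfF]
  have conj_mul : ∀ a b : CliffordAlgebra (sigQ p q),
      g * (a * b) * g' = (g * a * g') * (g * b * g') := by
    intro a b
    simp only [mul_assoc]
    rw [← mul_assoc g' g, hgu', one_mul]
  constructor
  · intro h j
    rcases hsign j with h1 | h1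
    · exact h1
    · exfalso
      apply hf0
      have hneg : f = -f := by
        calc f = g * f * g' := h.symm
          _ = g * (f * m j) * g' := by rw [hfm j]
          _ = (g * f * g') * (g * m j * g') := conj_mul f (m j)
          _ = f * -(m j) := by rw [h, h1]
          _ = -(f * m j) := by rw [mul_neg]
          _ = -f := by rw [hfm j]
      have h2 : (2:ℝ) • f = 0 := by rw [two_smul]; nth_rewrite 1 [hneg]; rw [neg_add_cancel]
      calc f = ((2:ℝ)⁻¹ * 2) • f := by norm_num
        _ = (2:ℝ)⁻¹ • ((2:ℝ) • f) := by rw [mul_smul]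
        _ = 0 := by rw [h2, smul_zero]
  · intro h
    have hlist : ∀ l : List (CliffordAlgebra (sigQ p q)),
        (∀ x ∈ l, g * x * g' = x) → g * l.prod * g' = l.prod := by
      intro l
      induction l with
      | nil => intro _; simpa using hgu
      | cons x t ih =>
        intro hx
        rw [List.prod_cons, conj_mul, hx x List.mem_cons_self,
          ih (fun y hy => hx y (List.mem_cons_of_mem x hy))]
    rw [hfdef]
    apply hlist
    intro x hx
    rw [List.mem_ofFn] at hx
    obtain ⟨j, rfl⟩ := hx
    rw [mul_smul_comm, smul_mul_assoc, mul_add, add_mul, mul_one, hgu, h j]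
end
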